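/- Let X_c be the feasible set of a market participant with bids I, periods {1,…,T}, quantities Q, minimum acceptance ratios r with 0 ≤ r_i ≤ 1, and ramp limits RU, RD ≥ 0, i.e. X_c = {(u,x) ∈ ℝ × ℝ^I : u ∈ {0,1}, 0 ≤ x_i ≤ u and x_i ≥ r_i u for all i, and for every t ∈ {1,…,T−1}, Σ_{i:t(i)=t+1}(−Q_i)x_i − Σ_{i:t(i)=t}(−Q_i)x_i ≤ RU·u and Σ_{i:t(i)=t}(−Q_i)x_i − Σ_{i:t(i)=t+1}(−Q_i)x_i ≤ RD·u}. Assume the slice {x : (1,x) ∈ X_c} is nonempty. Then conv(X_c) equals the continuous relaxation of X_c, i.e. the set defined by the same linear inequalities with u ∈ {0,1} replaced by 0 ≤ u ≤ 1. -/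

import Mathlib

open Finset

/-- Net increase of production from period `τ` to period `τ + 1`. -/
noncomputable def rampUpAmount {I : Type*} [Fintype I] (tmap : I → ℕ) (Q : I → ℝ)
    (x : I → ℝ) (τ : ℕ) : ℝ :=
  (∑ i ∈ Finset.univ.filter (fun i => tmap i = τ + 1), (-Q i) * x i) -
    ∑ i ∈ Finset.univ.filter (fun i => tmap i = τ), (-Q i) * x i

/-- Net decrease of production from period `τ` to period `τ + 1`. -/
noncomputable def rampDownAmount {I : Type*} [Fintype I] (tmap : I → ℕ) (Q : I → ℝ)
    (x : I → ℝ) (τ : ℕ) : ℝ :=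
  (∑ i ∈ Finset.univ.filter (fun i => tmap i = τ), (-Q i) * x i) -
    ∑ i ∈ Finset.univ.filter (fun i => tmap i = τ + 1), (-Q i) * x i

/-- The market participant's feasible set with bids `I`, periods `{1,…,T}`, quantities `Q`,
minimum acceptance ratios `r`, ramp limits `RU`, `RD`, where the commitment variable `u`
is constrained by the predicate `ucond` (binary or relaxed). -/
def bidFeasSet {I : Type*} [Fintype I] (tmap : I → ℕ) (Q r : I → ℝ) (RU RD : ℝ)
    (T : ℕ) (ucond : ℝ → Prop) : Set (ℝ × (I → ℝ)) :=
  {p : ℝ × (I → ℝ) | ucond p.1 ∧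
    (∀ i, 0 ≤ p.2 i ∧ p.2 i ≤ p.1 ∧ r i * p.1 ≤ p.2 i) ∧
    ∀ τ ∈ Finset.Icc 1 (T - 1),
      rampUpAmount tmap Q p.2 τ ≤ RU * p.1 ∧ rampDownAmount tmap Q p.2 τ ≤ RD * p.1}

lemma rampUp_lin {I : Type*} [Fintype I] (tmap : I → ℕ) (Q : I → ℝ) (x y : I → ℝ)
    (a b : ℝ) (τ : ℕ) :
    rampUpAmount tmap Q (fun i => a * x i + b * y i) τ =
      a * rampUpAmount tmap Q x τ + b * rampUpAmount tmap Q y τ := by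
  have h1 : ∀ s : Finset I, ∑ i ∈ s, (-Q i) * (a * x i + b * y i)
      = a * ∑ i ∈ s, (-Q i)*x i + b * ∑ i ∈ s, (-Q i)*y i := by
    intro s
    rw [Finset.mul_sum, Finset.mul_sum, ← Finset.sum_add_distrib]
    apply Finset.sum_congr rfl; intros; ring
  simp only [rampUpAmount, h1]; ring

lemma rampDown_eq_neg_rampUp {I : Type*} [Fintype I] (tmap : I → ℕ) (Q : I → ℝ)
    (x : I → ℝ) (τ : ℕ) :
    rampDownAmount tmap Q x τ = - rampUpAmount tmap Q x τ := by
  simp [rampDownAmount, rampUpAmount]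

lemma rampDown_lin {I : Type*} [Fintype I] (tmap : I → ℕ) (Q : I → ℝ) (x y : I → ℝ)
    (a b : ℝ) (τ : ℕ) :
    rampDownAmount tmap Q (fun i => a * x i + b * y i) τ =
      a * rampDownAmount tmap Q x τ + b * rampDownAmount tmap Q y τ := by
  rw [rampDown_eq_neg_rampUp, rampDown_eq_neg_rampUp, rampDown_eq_neg_rampUp, rampUp_lin]
  ring

lemma rampUp_smul {I : Type*} [Fintype I] (tmap : I → ℕ) (Q : I → ℝ) (x : I → ℝ)
    (c : ℝ) (τ : ℕ) :
    rampUpAmount tmap Q (fun i => c * x i) τ = c * rampUpAmount tmap Q x τ := by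
  simpa using rampUp_lin tmap Q x x c 0 τ

lemma rampDown_smul {I : Type*} [Fintype I] (tmap : I → ℕ) (Q : I → ℝ) (x : I → ℝ)
    (c : ℝ) (τ : ℕ) :
    rampDownAmount tmap Q (fun i => c * x i) τ = c * rampDownAmount tmap Q x τ := by
  rw [rampDown_eq_neg_rampUp, rampDown_eq_neg_rampUp, rampUp_smul]; ring

/-- with start-up decision, minimum acceptance ratios and ramp constraints,
the convex hull of the feasible set is given by its continuous relaxation. -/
theorem convexHull_bidFeasSet_eq_continuous_relaxation
    {I : Type*} [Fintype I] (T : ℕ) (hT : 1 ≤ T)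
    (tmap : I → ℕ) (htmap : ∀ i, 1 ≤ tmap i ∧ tmap i ≤ T)
    (Q r : I → ℝ) (hr : ∀ i, 0 ≤ r i ∧ r i ≤ 1)
    (RU RD : ℝ) (hRU : 0 ≤ RU) (hRD : 0 ≤ RD)
    (hslice : {x : I → ℝ |
      ((1 : ℝ), x) ∈ bidFeasSet tmap Q r RU RD T (fun u => u = 0 ∨ u = 1)}.Nonempty) :
    convexHull ℝ (bidFeasSet tmap Q r RU RD T (fun u => u = 0 ∨ u = 1)) =
      bidFeasSet tmap Q r RU RD T (fun u => 0 ≤ u ∧ u ≤ 1) := by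
  apply Set.Subset.antisymm
  · apply convexHull_min
    · rintro ⟨u, x⟩ ⟨hu, hx, hramp⟩
      refine ⟨?_, hx, hramp⟩
      dsimp only at hu ⊢
      rcases hu with h | h <;> simp [h]
    · rintro ⟨u, x⟩ ⟨⟨hu0, hu1⟩, hx, hramp⟩ ⟨v, y⟩ ⟨⟨hv0, hv1⟩, hy, hramp'⟩ a b ha hb hab
      dsimp only at hu0 hu1 hx hramp hv0 hv1 hy hramp'
      have habuv : a • ((u, x) : ℝ × (I → ℝ)) + b • (v, y) =
          ((a * u + b * v, fun i => a * x i + b * y i) : ℝ × (I → ℝ)) := by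
        refine Prod.ext rfl ?_
        funext i
        simp
      rw [habuv]
      refine ⟨⟨by positivity, by dsimp only; nlinarith⟩, ?_, ?_⟩
      · intro i
        obtain ⟨h1, h2, h3⟩ := hx i
        obtain ⟨h4, h5, h6⟩ := hy i
        dsimp only
        refine ⟨by positivity, by nlinarith, by nlinarith⟩
      · intro τ hτ
        obtain ⟨hu1', hu2'⟩ := hramp τ hτ
        obtain ⟨hv1', hv2'⟩ := hramp' τ hτ
        dsimp only
        rw [rampUp_lin, rampDown_lin]
        constructor <;> nlinarith
  · rintro ⟨u, x⟩ ⟨⟨hu0, hu1⟩, hx, hramp⟩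
    dsimp only at hu0 hu1 hx hramp
    rcases eq_or_lt_of_le hu0 with hu | hu
    · -- u = 0, hence x = 0
      have hx0 : x = 0 := by
        funext i
        obtain ⟨h1, h2, _⟩ := hx i
        have : x i ≤ 0 := by rw [← hu] at h2; exact h2
        have : (0:ℝ) ≤ x i := h1
        simp only [Pi.zero_apply]
        linarith
      apply subset_convexHull
      refine ⟨Or.inl hu.symm, ?_, ?_⟩
      · intro i
        simp [hx0, ← hu]
      · intro τ hτ
        simp [hx0, ← hu, rampUpAmount, rampDownAmount]
    · -- 0 < u : convex combination of (0,0) and (1, x/u)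
      have hzero : ((0 : ℝ), (0 : I → ℝ)) ∈
          bidFeasSet tmap Q r RU RD T (fun u => u = 0 ∨ u = 1) := by
        refine ⟨Or.inl rfl, by simp, by simp [rampUpAmount, rampDownAmount]⟩
      have hone : ((1 : ℝ), fun i => u⁻¹ * x i) ∈
          bidFeasSet tmap Q r RU RD T (fun u => u = 0 ∨ u = 1) := by
        refine ⟨Or.inr rfl, ?_, ?_⟩
        · intro i
          obtain ⟨h1, h2, h3⟩ := hx i
          refine ⟨by positivity, ?_, ?_⟩
          · show u⁻¹ * x i ≤ 1
            rw [← div_eq_inv_mul, div_le_one hu]; exact h2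
          · show r i * 1 ≤ u⁻¹ * x i
            rw [mul_one, ← div_eq_inv_mul, le_div_iff₀ hu]; exact h3
        · intro τ hτ
          obtain ⟨h1, h2⟩ := hramp τ hτ
          show rampUpAmount tmap Q (fun i => u⁻¹ * x i) τ ≤ RU * 1 ∧
            rampDownAmount tmap Q (fun i => u⁻¹ * x i) τ ≤ RD * 1
          rw [rampUp_smul, rampDown_smul]
          have hui : (0:ℝ) ≤ u⁻¹ := by positivity
          constructor
          · calc u⁻¹ * rampUpAmount tmap Q x τ ≤ u⁻¹ * (RU * u) :=
                mul_le_mul_of_nonneg_left h1 hui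
              _ = RU * 1 := by field_simp
          · calc u⁻¹ * rampDownAmount tmap Q x τ ≤ u⁻¹ * (RD * u) :=
                mul_le_mul_of_nonneg_left h2 hui
              _ = RD * 1 := by field_simp
      have hcomb : ((u : ℝ), x) = (1 - u) • ((0 : ℝ), (0 : I → ℝ)) +
          u • ((1 : ℝ), fun i => u⁻¹ * x i) := by
        refine Prod.ext (by simp) ?_
        funext i
        show x i = (1 - u) * 0 + u * (u⁻¹ * x i)
        field_simp
        ring
      rw [hcomb]
      exact convex_convexHull ℝ _ (subset_convexHull ℝ _ hzero)
        (subset_convexHull ℝ _ hone) (by linarith) (le_of_lt hu) (by ring)
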